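/- arXiv:2010.05604 — 2 statements merged into one kernel-verified Lean document; each statement's English description precedes it below -/
import Mathlib

section
/- Let U ⊂ ℝ^N be open and G̃ : U × ℝ^N → ℝ a Finsler-type energy on U (continuous, C² for v ≠ 0, fiberwise positively 2-homogeneous, with (1/ℓ)‖v‖² ≤ G̃(z,v) ≤ ℓ‖v‖² and d²_{vv}G̃(z,v)[w,w] ≥ α‖w‖² for v ≠ 0). Extend d_vG̃ to v = 0 by d_vG̃(z,0) := 0. Let ξ_n, ξ : [a,b] → U be H¹ curves such that ξ_n → ξ uniformly, ξ̇_n converges weakly in L² to ξ̇, and liminf_{n→∞} ∫_a^b ( d_vG̃(ξ_n,ξ̇_n) − d_vG̃(ξ_n,ξ̇) )[ξ̇ − ξ̇_n] ds ≥ 0. Then ξ̇_n → ξ̇ strongly in L², i.e. ∫_a^b ‖ξ̇ − ξ̇_n‖² ds → 0. -/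
open MeasureTheory Set Filter RealInnerProductSpace

noncomputable section

/-- Euclidean space `ℝ^n`. -/
abbrev Evec (n : ℕ) := EuclideanSpace ℝ (Fin n)

/-- An `H¹` curve on `[a,b]`: an absolutely continuous curve whose a.e. derivative is
square-integrable, encoded by a choice of (integrable, square-integrable) derivative
together with the fundamental theorem of calculus identity. -/
structure H1Curve (n : ℕ) (a b : ℝ) where
  toFun : ℝ → Evec n
  deriv : ℝ → Evec n
  deriv_integrable : IntegrableOn deriv (Icc a b)
  deriv_sq_integrable : IntegrableOn (fun s => ‖deriv s‖ ^ 2) (Icc a b)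
  eq_add_integral : ∀ t ∈ Icc a b, toFun t = toFun a + ∫ s in a..t, deriv s

section Aux
variable {N : ℕ} {F : Evec N → ℝ} {α : ℝ}

/-- L1: chain rule for the applied second derivative along a line. -/
lemma aux_hasDerivAt (hFsm : ∀ y : Evec N, y ≠ 0 → ContDiffAt ℝ 2 F y)
    (x u : Evec N) (t : ℝ) (ht : x + t • u ≠ 0) :
    HasDerivAt (fun r : ℝ => fderiv ℝ F (x + r • u) u)
      (fderiv ℝ (fun y => fderiv ℝ F y u) (x + t • u) u) t := by
  set p := x + t • u with hp
  have h1 : ContDiffAt ℝ 1 (fderiv ℝ F) p :=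
    (hFsm p ht).fderiv_right (le_refl _)
  have h2 : DifferentiableAt ℝ (fderiv ℝ F) p := h1.differentiableAt one_ne_zero
  have h3 : DifferentiableAt ℝ (fun y => fderiv ℝ F y u) p := by
    exact (ContinuousLinearMap.apply ℝ ℝ u).differentiableAt.comp p h2
  have hγ : HasDerivAt (fun r : ℝ => x + r • u) u t := by
    simpa using ((hasDerivAt_id t).smul_const u).const_add x
  exact h3.hasFDerivAt.comp_hasDerivAt t hγ

/-- L2: monotonicity of the applied derivative along a segment avoiding 0. -/
lemma aux_mono (hFsm : ∀ y : Evec N, y ≠ 0 → ContDiffAt ℝ 2 F y)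
    (hcv : ∀ y : Evec N, y ≠ 0 → ∀ w : Evec N,
      α * ‖w‖ ^ 2 ≤ fderiv ℝ (fun y' => fderiv ℝ F y' w) y w)
    (x u : Evec N) (hseg : ∀ t ∈ Icc (0:ℝ) 1, x + t • u ≠ 0) :
    fderiv ℝ F x u + α * ‖u‖ ^ 2 ≤ fderiv ℝ F (x + u) u := by
  set φ := fun r : ℝ => fderiv ℝ F (x + r • u) u with hφ
  set φ' := fun r : ℝ => fderiv ℝ (fun y => fderiv ℝ F y u) (x + r • u) u with hφ'
  have hder : ∀ t ∈ Icc (0:ℝ) 1, HasDerivAt φ (φ' t) t :=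
    fun t ht => aux_hasDerivAt hFsm x u t (hseg t ht)
  have hcont : ContinuousOn φ (Icc 0 1) :=
    fun t ht => (hder t ht).continuousAt.continuousWithinAt
  obtain ⟨c, hc, hslope⟩ := exists_hasDerivAt_eq_slope φ φ' zero_lt_one hcont
    (fun t ht => hder t (Ioo_subset_Icc_self ht))
  have hge : α * ‖u‖ ^ 2 ≤ φ' c := hcv _ (hseg c (Ioo_subset_Icc_self hc)) u
  have h0 : φ 0 = fderiv ℝ F x u := by simp [hφ]
  have h1 : φ 1 = fderiv ℝ F (x + u) u := by simp [hφ]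
  rw [h0, h1] at hslope
  rw [hslope] at hge
  have : (1:ℝ) - 0 = 1 := by norm_num
  rw [this, div_one] at hge
  linarith

end Aux

section Aux2
variable {N : ℕ} {F : Evec N → ℝ} {α : ℝ}

/-- L4: gradient inequality for small increments. -/
lemma aux_slope (hα : 0 ≤ α) (hFsm : ∀ y : Evec N, y ≠ 0 → ContDiffAt ℝ 2 F y)
    (hcv : ∀ y : Evec N, y ≠ 0 → ∀ w : Evec N,
      α * ‖w‖ ^ 2 ≤ fderiv ℝ (fun y' => fderiv ℝ F y' w) y w)
    (x h : Evec N) (hx : x ≠ 0) (hh : ‖h‖ < ‖x‖) :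
    fderiv ℝ F x h ≤ F (x + h) - F x := by
  have hseg : ∀ t ∈ Icc (0:ℝ) 1, x + t • h ≠ 0 := by
    intro t ht hzero
    have h1 : ‖t • h‖ < ‖x‖ := by
      rw [norm_smul, Real.norm_eq_abs, abs_of_nonneg ht.1]
      calc t * ‖h‖ ≤ 1 * ‖h‖ := by
            apply mul_le_mul_of_nonneg_right ht.2 (norm_nonneg _)
        _ = ‖h‖ := one_mul _
        _ < ‖x‖ := hh
    have : x = -(t • h) := by linear_combination (norm := module) hzero
    rw [this, norm_neg] at h1
    exact lt_irrefl _ h1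
  set ψ := fun r : ℝ => F (x + r • h) with hψ
  set ψ' := fun r : ℝ => fderiv ℝ F (x + r • h) h with hψ'
  have hder : ∀ t ∈ Icc (0:ℝ) 1, HasDerivAt ψ (ψ' t) t := by
    intro t ht
    have hdF : DifferentiableAt ℝ F (x + t • h) :=
      ((hFsm _ (hseg t ht)).differentiableAt (by norm_num))
    have hγ : HasDerivAt (fun r : ℝ => x + r • h) h t := by
      simpa using ((hasDerivAt_id t).smul_const h).const_add x
    exact hdF.hasFDerivAt.comp_hasDerivAt t hγ
  have hcont : ContinuousOn ψ (Icc 0 1) :=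
    fun t ht => (hder t ht).continuousAt.continuousWithinAt
  obtain ⟨c, hc, hslope⟩ := exists_hasDerivAt_eq_slope ψ ψ' zero_lt_one hcont
    (fun t ht => hder t (Ioo_subset_Icc_self ht))
  have hc0 : (0:ℝ) < c := hc.1
  -- fderiv F x h ≤ ψ' c using aux_mono with u := c • h
  have hseg2 : ∀ t ∈ Icc (0:ℝ) 1, x + t • (c • h) ≠ 0 := by
    intro t ht
    rw [smul_smul]
    exact hseg (t * c) ⟨mul_nonneg ht.1 hc0.le,
      mul_le_one₀ ht.2 hc0.le hc.2.le⟩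
  have hmono := aux_mono hFsm hcv x (c • h) hseg2
  have hle : fderiv ℝ F x h ≤ ψ' c := by
    have e1 : fderiv ℝ F x (c • h) = c * fderiv ℝ F x h := by
      rw [_root_.map_smul]; rfl
    have e2 : fderiv ℝ F (x + c • h) (c • h) = c * ψ' c := by
      rw [_root_.map_smul]; rfl
    rw [e1, e2] at hmono
    have hα2 : 0 ≤ α * ‖c • h‖ ^ 2 := by positivity
    nlinarith
  have h0 : ψ 0 = F x := by simp [hψ]
  have h1 : ψ 1 = F (x + h) := by simp [hψ]
  rw [h0, h1] at hslope
  have : (1:ℝ) - 0 = 1 := by norm_num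
  rw [this, div_one] at hslope
  linarith [hslope ▸ hle]

end Aux2

section Aux3
variable {N : ℕ} {F : Evec N → ℝ} {α ℓ : ℝ}

/-- L5: linear bound on the derivative. -/
lemma aux_bound (hα : 0 ≤ α) (hℓ : 1 ≤ ℓ)
    (hFsm : ∀ y : Evec N, y ≠ 0 → ContDiffAt ℝ 2 F y)
    (hcv : ∀ y : Evec N, y ≠ 0 → ∀ w : Evec N,
      α * ‖w‖ ^ 2 ≤ fderiv ℝ (fun y' => fderiv ℝ F y' w) y w)
    (hupp : ∀ v : Evec N, F v ≤ ℓ * ‖v‖ ^ 2) (hnn : ∀ v : Evec N, 0 ≤ F v)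
    (x v : Evec N) (hx : x ≠ 0) : |fderiv ℝ F x v| ≤ 5 * ℓ * ‖x‖ * ‖v‖ := by
  have hℓ0 : (0:ℝ) < ℓ := lt_of_lt_of_le one_pos hℓ
  have hx0 : (0:ℝ) < ‖x‖ := norm_pos_iff.2 hx
  have key : ∀ w : Evec N, fderiv ℝ F x w ≤ 5 * ℓ * ‖x‖ * ‖w‖ := by
    intro w
    rcases eq_or_ne w 0 with hw | hw
    · rw [hw]; simp
    have hw0 : (0:ℝ) < ‖w‖ := norm_pos_iff.2 hw
    set h := (‖x‖ / (2 * ‖w‖)) • w with hh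
    have hnh : ‖h‖ = ‖x‖ / 2 := by
      rw [hh, norm_smul, Real.norm_eq_abs, abs_of_pos (by positivity)]
      field_simp
    have hlt : ‖h‖ < ‖x‖ := by rw [hnh]; linarith
    have hsl := aux_slope hα hFsm hcv x h hx hlt
    have hFle : F (x + h) - F x ≤ ℓ * (3 / 2 * ‖x‖) ^ 2 := by
      have h1 : F (x + h) ≤ ℓ * ‖x + h‖ ^ 2 := hupp _
      have h2 : ‖x + h‖ ≤ 3 / 2 * ‖x‖ := by
        calc ‖x + h‖ ≤ ‖x‖ + ‖h‖ := norm_add_le _ _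
          _ = 3 / 2 * ‖x‖ := by rw [hnh]; ring
      have h3 : ℓ * ‖x + h‖ ^ 2 ≤ ℓ * (3 / 2 * ‖x‖) ^ 2 := by
        apply mul_le_mul_of_nonneg_left _ hℓ0.le
        exact pow_le_pow_left₀ (norm_nonneg _) h2 2
      have h4 : 0 ≤ F x := hnn x
      linarith
    have e1 : fderiv ℝ F x h = ‖x‖ / (2 * ‖w‖) * fderiv ℝ F x w := by
      rw [hh, _root_.map_smul]; rfl
    rw [e1] at hsl
    have := hsl.trans hFle
    rw [div_mul_eq_mul_div, div_le_iff₀ (by positivity)] at this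
    have h9 : ℓ * (3 / 2 * ‖x‖) ^ 2 * (2 * ‖w‖) = ‖x‖ * (9 / 2 * ℓ * ‖x‖ * ‖w‖) := by ring
    rw [h9] at this
    have h10 := (mul_le_mul_iff_right₀ hx0).mp this
    have h11 : 0 ≤ ℓ * ‖x‖ * ‖w‖ := by positivity
    linarith
  rw [abs_le]
  constructor
  · have := key (-v)
    rw [_root_.map_neg, norm_neg] at this
    linarith
  · exact key v

/-- L6: 1-homogeneity of the derivative. -/
lemma aux_homog (hFsm : ∀ y : Evec N, y ≠ 0 → ContDiffAt ℝ 2 F y)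
    (hhom : ∀ (v : Evec N) (lam : ℝ), 0 < lam → F (lam • v) = lam ^ 2 * F v)
    (x : Evec N) (hx : x ≠ 0) (s : ℝ) (hs : 0 < s) (u : Evec N) :
    fderiv ℝ F (s • x) u = s * fderiv ℝ F x u := by
  have hsx : s • x ≠ 0 := smul_ne_zero hs.ne' hx
  have hd1 : DifferentiableAt ℝ F (s • x) :=
    (hFsm _ hsx).differentiableAt (by norm_num)
  have hd2 : DifferentiableAt ℝ F x := (hFsm _ hx).differentiableAt (by norm_num)
  have hA : HasFDerivAt (fun y : Evec N => F (s • y))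
      ((fderiv ℝ F (s • x)).comp (s • ContinuousLinearMap.id ℝ (Evec N))) x := by
    have hins : HasFDerivAt (fun y : Evec N => s • y)
        (s • ContinuousLinearMap.id ℝ (Evec N)) x := by
      exact (hasFDerivAt_id x).const_smul s
    exact hd1.hasFDerivAt.comp x hins
  have hB : HasFDerivAt (fun y : Evec N => s ^ 2 * F y)
      (s ^ 2 • fderiv ℝ F x) x := hd2.hasFDerivAt.const_mul (s ^ 2)
  have heq : (fun y : Evec N => F (s • y)) = fun y : Evec N => s ^ 2 * F y := by
    funext y; exact hhom y s hs
  rw [heq] at hA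
  have := hA.unique hB
  have happ := congrArg (fun (L : Evec N →L[ℝ] ℝ) => L u) this
  simp only [ContinuousLinearMap.comp_apply, ContinuousLinearMap.smul_apply,
    ContinuousLinearMap.coe_smul', ContinuousLinearMap.id_apply, Pi.smul_apply,
    smul_eq_mul] at happ
  have : fderiv ℝ F (s • x) (s • u) = s * fderiv ℝ F (s • x) u := by
    rw [_root_.map_smul]; rfl
  rw [this] at happ
  have hs0 : s ≠ 0 := hs.ne'
  nlinarith [happ]

/-- L7: Euler identity. -/
lemma aux_euler (hFsm : ∀ y : Evec N, y ≠ 0 → ContDiffAt ℝ 2 F y)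
    (hhom : ∀ (v : Evec N) (lam : ℝ), 0 < lam → F (lam • v) = lam ^ 2 * F v)
    (x : Evec N) (hx : x ≠ 0) : fderiv ℝ F x x = 2 * F x := by
  have hd : DifferentiableAt ℝ F x := (hFsm _ hx).differentiableAt (by norm_num)
  have hγ : HasDerivAt (fun t : ℝ => t • x) x 1 := by
    simpa using (hasDerivAt_id (1:ℝ)).smul_const x
  have hg : HasDerivAt (fun t : ℝ => F (t • x)) (fderiv ℝ F x x) 1 := by
    have hF1 : HasFDerivAt F (fderiv ℝ F x) ((1:ℝ) • x) := by
      rw [one_smul]; exact hd.hasFDerivAt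
    exact hF1.comp_hasDerivAt 1 hγ
  have hg2 : HasDerivAt (fun t : ℝ => t ^ 2 * F x) (2 * F x) 1 := by
    simpa using (hasDerivAt_pow 2 (1:ℝ)).mul_const (F x)
  have hev : (fun t : ℝ => F (t • x)) =ᶠ[nhds (1:ℝ)] fun t : ℝ => t ^ 2 * F x := by
    filter_upwards [eventually_gt_nhds one_pos] with t ht
    exact hhom x t ht
  have hg3 : HasDerivAt (fun t : ℝ => F (t • x)) (2 * F x) 1 :=
    hg2.congr_of_eventuallyEq hev
  exact hg.unique hg3

end Aux3

section Aux4
variable {N : ℕ} {F : Evec N → ℝ} {α ℓ : ℝ}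

/-- L8: pointwise strong monotonicity of the extended derivative `d`. -/
lemma aux_strong_mono (hα : 0 < α) (hℓ : 1 ≤ ℓ)
    (hFsm : ∀ y : Evec N, y ≠ 0 → ContDiffAt ℝ 2 F y)
    (hcv : ∀ y : Evec N, y ≠ 0 → ∀ w : Evec N,
      α * ‖w‖ ^ 2 ≤ fderiv ℝ (fun y' => fderiv ℝ F y' w) y w)
    (hhom : ∀ (v : Evec N) (lam : ℝ), 0 < lam → F (lam • v) = lam ^ 2 * F v)
    (hlow : ∀ v : Evec N, (1 / ℓ) * ‖v‖ ^ 2 ≤ F v)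
    (d : Evec N → Evec N →L[ℝ] ℝ) (hd0 : d 0 = 0)
    (hd : ∀ x : Evec N, x ≠ 0 → d x = fderiv ℝ F x)
    (v w : Evec N) :
    min α (2 / ℓ) * ‖v - w‖ ^ 2 ≤ d v (v - w) - d w (v - w) := by
  have hℓ0 : (0:ℝ) < ℓ := lt_of_lt_of_le one_pos hℓ
  set u := v - w with hu
  rcases eq_or_ne u 0 with h0 | hne
  · rw [h0]; simp
  have hvw : w + u = v := by rw [hu]; abel
  by_cases hseg : ∀ t ∈ Icc (0:ℝ) 1, w + t • u ≠ 0
  · have hw0 : w ≠ 0 := by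
      have := hseg 0 ⟨le_refl 0, zero_le_one⟩; simpa using this
    have hv0 : v ≠ 0 := by
      have := hseg 1 ⟨zero_le_one, le_refl 1⟩
      rwa [one_smul, hvw] at this
    have := aux_mono hFsm hcv w u hseg
    rw [hvw] at this
    rw [hd v hv0, hd w hw0]
    have hmin : min α (2 / ℓ) ≤ α := min_le_left _ _
    have : min α (2 / ℓ) * ‖u‖ ^ 2 ≤ α * ‖u‖ ^ 2 :=
      mul_le_mul_of_nonneg_right hmin (by positivity)
    linarith [aux_mono hFsm hcv w u hseg, hvw ▸ (aux_mono hFsm hcv w u hseg)]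
  · push_neg at hseg
    obtain ⟨t₀, ht₀, hzero⟩ := hseg
    have hw : w = -(t₀ • u) := by linear_combination (norm := module) hzero
    have hv : v = (1 - t₀) • u := by
      rw [← hvw, hw]
      module
    have hFu : (1 / ℓ) * ‖u‖ ^ 2 ≤ F u := hlow u
    have hFnu : (1 / ℓ) * ‖u‖ ^ 2 ≤ F (-u) := by
      have := hlow (-u); rwa [norm_neg] at this
    have hdv : d v u = 2 * (1 - t₀) * F u := by
      rcases eq_or_lt_of_le ht₀.2 with h1 | h1
      · have : v = 0 := by rw [hv, ← h1]; simp
        rw [this, hd0]; rw [← h1]; simp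
      · have hpos : 0 < 1 - t₀ := by linarith
        have hv0 : v ≠ 0 := by rw [hv]; exact smul_ne_zero hpos.ne' hne
        rw [hd v hv0, hv, aux_homog hFsm hhom u hne _ hpos,
          aux_euler hFsm hhom u hne]
        ring
    have hdw : d w u = -(2 * t₀ * F (-u)) := by
      rcases eq_or_lt_of_le ht₀.1 with h0' | h0'
      · have : w = 0 := by rw [hw, ← h0']; simp
        rw [this, hd0, ← h0']; simp
      · have hw' : w = t₀ • (-u) := by rw [hw]; module
        have hnu : (-u : Evec N) ≠ 0 := neg_ne_zero.2 hne
        have hw0 : w ≠ 0 := by rw [hw']; exact smul_ne_zero h0'.ne' hnu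
        rw [hd w hw0, hw', aux_homog hFsm hhom (-u) hnu _ h0']
        have : fderiv ℝ F (-u) u = -(2 * F (-u)) := by
          have he := aux_euler hFsm hhom (-u) hnu
          have : fderiv ℝ F (-u) u = -(fderiv ℝ F (-u) (-u)) := by
            rw [_root_.map_neg]; ring
          rw [this, he]
        rw [this]; ring
    rw [hdv, hdw]
    have hmin : min α (2 / ℓ) ≤ 2 / ℓ := min_le_right _ _
    have h1 : min α (2 / ℓ) * ‖u‖ ^ 2 ≤ (2 / ℓ) * ‖u‖ ^ 2 :=
      mul_le_mul_of_nonneg_right hmin (by positivity)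
    have ht0 : 0 ≤ t₀ := ht₀.1
    have ht1 : t₀ ≤ 1 := ht₀.2
    have h2 : 2 / ℓ * ‖u‖ ^ 2 ≤ 2 * (1 - t₀) * F u + 2 * t₀ * F (-u) := by
      have e1 : 2 * (1 - t₀) * (1 / ℓ * ‖u‖ ^ 2) ≤ 2 * (1 - t₀) * F u :=
        mul_le_mul_of_nonneg_left hFu (by linarith)
      have e2 : 2 * t₀ * (1 / ℓ * ‖u‖ ^ 2) ≤ 2 * t₀ * F (-u) :=
        mul_le_mul_of_nonneg_left hFnu (by linarith)
      have e3 : 2 * (1 - t₀) * (1 / ℓ * ‖u‖ ^ 2) + 2 * t₀ * (1 / ℓ * ‖u‖ ^ 2)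
          = 2 / ℓ * ‖u‖ ^ 2 := by ring
      linarith
    linarith

end Aux4

section Aux5
variable {N : ℕ}

/-- Continuity of the extended fiber derivative, applied. -/
lemma aux_cont (U : Set (Evec N)) (hU : IsOpen U) (G : Evec N → Evec N → ℝ)
    (hsmooth : ContDiffOn ℝ 2 (fun p : Evec N × Evec N => G p.1 p.2)
      {p : Evec N × Evec N | p.1 ∈ U ∧ p.2 ≠ 0})
    (dv : Evec N → Evec N → Evec N →L[ℝ] ℝ)
    (hdv0 : ∀ z, dv z 0 = 0)
    (hdv : ∀ z v, v ≠ 0 → dv z v = fderiv ℝ (fun w => G z w) v)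
    (C : ℝ) (hbd : ∀ z ∈ U, ∀ x v : Evec N, |dv z x v| ≤ C * ‖x‖ * ‖v‖) :
    ContinuousOn (fun p : Evec N × Evec N × Evec N => dv p.1 p.2.1 p.2.2)
      {p : Evec N × Evec N × Evec N | p.1 ∈ U} := by
  have hSopen : IsOpen {p : Evec N × Evec N | p.1 ∈ U ∧ p.2 ≠ 0} := by
    have : {p : Evec N × Evec N | p.1 ∈ U ∧ p.2 ≠ 0}
        = (Prod.fst ⁻¹' U) ∩ (Prod.snd ⁻¹' ({0}ᶜ : Set (Evec N))) := by
      ext p; simp [mem_compl_iff]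
    rw [this]
    exact (hU.preimage continuous_fst).inter
      (isOpen_compl_singleton.preimage continuous_snd)
  set A := fderiv ℝ (fun p : Evec N × Evec N => G p.1 p.2) with hA
  have hAcont : ContinuousOn A {p : Evec N × Evec N | p.1 ∈ U ∧ p.2 ≠ 0} :=
    hsmooth.continuousOn_fderiv_of_isOpen hSopen one_le_two
  have hrep : ∀ z ∈ U, ∀ x : Evec N, x ≠ 0 → ∀ v : Evec N,
      dv z x v = A (z, x) (0, v) := by
    intro z hz x hx v
    have hdiff : DifferentiableAt ℝ (fun p : Evec N × Evec N => G p.1 p.2) (z, x) :=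
      ((hsmooth.contDiffAt (hSopen.mem_nhds ⟨hz, hx⟩)).differentiableAt two_ne_zero)
    have hins : HasFDerivAt (fun y : Evec N => ((z, y) : Evec N × Evec N))
        (ContinuousLinearMap.inr ℝ (Evec N) (Evec N)) x := by
      have he : (fun y : Evec N => ((z, y) : Evec N × Evec N))
          = fun y => ((z, 0) : Evec N × Evec N)
            + (ContinuousLinearMap.inr ℝ (Evec N) (Evec N)) y := by
        funext y; simp
      rw [he]
      exact ((ContinuousLinearMap.inr ℝ (Evec N) (Evec N)).hasFDerivAt).const_add _
    have hcomp : HasFDerivAt (fun y => G z y)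
        ((A (z, x)).comp (ContinuousLinearMap.inr ℝ (Evec N) (Evec N))) x :=
      hdiff.hasFDerivAt.comp x hins
    rw [hdv z x hx, hcomp.fderiv]
    rfl
  have hW'open : IsOpen {q : Evec N × Evec N × Evec N | q.1 ∈ U ∧ q.2.1 ≠ 0} := by
    have : {q : Evec N × Evec N × Evec N | q.1 ∈ U ∧ q.2.1 ≠ 0}
        = (Prod.fst ⁻¹' U) ∩ ((fun q : Evec N × Evec N × Evec N => q.2.1) ⁻¹'
            ({0}ᶜ : Set (Evec N))) := by
      ext q; simp [mem_compl_iff]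
    rw [this]
    exact (hU.preimage continuous_fst).inter
      (isOpen_compl_singleton.preimage (continuous_fst.comp continuous_snd))
  intro p hp
  by_cases hx0 : p.2.1 = 0
  · -- continuity at the zero section by the linear bound
    have hfp : dv p.1 p.2.1 p.2.2 = 0 := by rw [hx0, hdv0]; rfl
    rw [ContinuousWithinAt, hfp]
    have hbnd : ∀ᶠ q in nhdsWithin p {p : Evec N × Evec N × Evec N | p.1 ∈ U},
        ‖dv q.1 q.2.1 q.2.2‖ ≤ C * ‖q.2.1‖ * ‖q.2.2‖ := by
      filter_upwards [self_mem_nhdsWithin] with q hq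
      have := hbd q.1 hq q.2.1 q.2.2
      rwa [Real.norm_eq_abs]
    have htend : Tendsto (fun q : Evec N × Evec N × Evec N => C * ‖q.2.1‖ * ‖q.2.2‖)
        (nhdsWithin p {p : Evec N × Evec N × Evec N | p.1 ∈ U}) (nhds 0) := by
      have hg : Continuous fun q : Evec N × Evec N × Evec N =>
          C * ‖q.2.1‖ * ‖q.2.2‖ := by fun_prop
      have hval : (C * ‖p.2.1‖ * ‖p.2.2‖ : ℝ) = 0 := by rw [hx0]; simp
      have h2 := hg.tendsto p
      rw [hval] at h2
      exact h2.mono_left nhdsWithin_le_nhds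
    exact squeeze_zero_norm' hbnd htend
  · -- continuity away from the zero section via `A`
    have hp' : p ∈ {q : Evec N × Evec N × Evec N | q.1 ∈ U ∧ q.2.1 ≠ 0} := ⟨hp, hx0⟩
    have hco : ContinuousOn (fun q : Evec N × Evec N × Evec N => A (q.1, q.2.1) ((0 : Evec N), q.2.2))
        {q : Evec N × Evec N × Evec N | q.1 ∈ U ∧ q.2.1 ≠ 0} := by
      apply ContinuousOn.clm_apply
      · exact hAcont.comp
          ((continuous_fst.prodMk (continuous_fst.comp continuous_snd)).continuousOn)
          (fun q hq => hq)
      · exact (continuous_const.prodMk (continuous_snd.comp continuous_snd)).continuousOn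
    have hca : ContinuousAt (fun q : Evec N × Evec N × Evec N => A (q.1, q.2.1) ((0 : Evec N), q.2.2)) p :=
      hco.continuousAt (hW'open.mem_nhds hp')
    have heq : (fun q : Evec N × Evec N × Evec N => A (q.1, q.2.1) ((0 : Evec N), q.2.2))
        =ᶠ[nhds p] (fun q : Evec N × Evec N × Evec N => dv q.1 q.2.1 q.2.2) := by
      filter_upwards [hW'open.mem_nhds hp'] with q hq
      exact (hrep q.1 hq.1 q.2.1 hq.2 q.2.2).symm
    exact (hca.congr heq).continuousWithinAt

end Aux5


/-- Strong `L²` convergence of derivatives from the monotonicity-type liminf condition: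
if `ξ_n → ξ` uniformly, `ξ̇_n ⇀ ξ̇` weakly in `L²`, and
`liminf ∫ (d_vG̃(ξ_n,ξ̇_n) − d_vG̃(ξ_n,ξ̇))[ξ̇ − ξ̇_n] ≥ 0`, then `ξ̇_n → ξ̇` strongly in `L²`.
Here `dv` is the fiberwise differential of the Finsler-type energy `G̃`, extended by `0` on
the zero section. -/
theorem stmt_14 {N : ℕ} (U : Set (Evec N)) (hU : IsOpen U)
    (G : Evec N → Evec N → ℝ) (ℓ α : ℝ) (hℓ : 1 ≤ ℓ) (hα : 0 < α)
    (hcont : ContinuousOn (fun p : Evec N × Evec N => G p.1 p.2) (U ×ˢ univ))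
    (hsmooth : ContDiffOn ℝ 2 (fun p : Evec N × Evec N => G p.1 p.2)
      {p : Evec N × Evec N | p.1 ∈ U ∧ p.2 ≠ 0})
    (hhomog : ∀ z ∈ U, ∀ v : Evec N, ∀ lam : ℝ, 0 < lam → G z (lam • v) = lam ^ 2 * G z v)
    (hlower : ∀ z ∈ U, ∀ v : Evec N, (1 / ℓ) * ‖v‖ ^ 2 ≤ G z v)
    (hupper : ∀ z ∈ U, ∀ v : Evec N, G z v ≤ ℓ * ‖v‖ ^ 2)
    (hconv : ∀ z ∈ U, ∀ v : Evec N, v ≠ 0 → ∀ w : Evec N,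
      α * ‖w‖ ^ 2 ≤ fderiv ℝ (fun u => fderiv ℝ (fun w' => G z w') u w) v w)
    (dv : Evec N → Evec N → Evec N →L[ℝ] ℝ)
    (hdv0 : ∀ z, dv z 0 = 0)
    (hdv : ∀ z v, v ≠ 0 → dv z v = fderiv ℝ (fun w => G z w) v)
    (a b : ℝ) (hab : a < b)
    (ξn : ℕ → H1Curve N a b) (ξ : H1Curve N a b)
    (hmem : ∀ k : ℕ, ∀ s ∈ Icc a b, (ξn k).toFun s ∈ U)
    (hmemξ : ∀ s ∈ Icc a b, ξ.toFun s ∈ U)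
    (hunif : TendstoUniformlyOn (fun k s => (ξn k).toFun s) ξ.toFun atTop (Icc a b))
    (hweak : ∀ g : ℝ → Evec N, MemLp g 2 (volume.restrict (Icc a b)) →
      Tendsto (fun k => ∫ s in a..b, ⟪(ξn k).deriv s, g s⟫) atTop
        (nhds (∫ s in a..b, ⟪ξ.deriv s, g s⟫)))
    (hliminf : ∀ ε > (0:ℝ), ∀ᶠ k in atTop,
      -ε ≤ ∫ s in a..b,
        (dv ((ξn k).toFun s) ((ξn k).deriv s) (ξ.deriv s - (ξn k).deriv s) -
          dv ((ξn k).toFun s) (ξ.deriv s) (ξ.deriv s - (ξn k).deriv s))) :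
    Tendsto (fun k => ∫ s in a..b, ‖ξ.deriv s - (ξn k).deriv s‖ ^ 2) atTop (nhds 0) := by

  classical
  have hℓ0 : (0:ℝ) < ℓ := lt_of_lt_of_le one_pos hℓ
  have haleb : a ≤ b := hab.le
  -- pointwise facts for each base point z ∈ U
  have hSopen : IsOpen {p : Evec N × Evec N | p.1 ∈ U ∧ p.2 ≠ 0} := by
    have : {p : Evec N × Evec N | p.1 ∈ U ∧ p.2 ≠ 0}
        = (Prod.fst ⁻¹' U) ∩ (Prod.snd ⁻¹' ({0}ᶜ : Set (Evec N))) := by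
      ext p; simp [mem_compl_iff]
    rw [this]
    exact (hU.preimage continuous_fst).inter
      (isOpen_compl_singleton.preimage continuous_snd)
  have hFsm : ∀ z ∈ U, ∀ x : Evec N, x ≠ 0 → ContDiffAt ℝ 2 (G z) x := by
    intro z hz x hx
    have h1 : ContDiffAt ℝ 2 (fun p : Evec N × Evec N => G p.1 p.2) (z, x) :=
      hsmooth.contDiffAt (hSopen.mem_nhds ⟨hz, hx⟩)
    have h2 : ContDiffAt ℝ 2 (fun y : Evec N => ((z, y) : Evec N × Evec N)) x :=
      contDiffAt_const.prodMk contDiffAt_id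
    exact h1.comp x h2
  have hnn : ∀ z ∈ U, ∀ v : Evec N, 0 ≤ G z v := by
    intro z hz v
    have := hlower z hz v
    have h2 : (0:ℝ) ≤ (1 / ℓ) * ‖v‖ ^ 2 := by positivity
    linarith
  have hbd : ∀ z ∈ U, ∀ x v : Evec N, |dv z x v| ≤ 5 * ℓ * ‖x‖ * ‖v‖ := by
    intro z hz x v
    rcases eq_or_ne x 0 with hx | hx
    · rw [hx, hdv0]
      simp only [ContinuousLinearMap.zero_apply, abs_zero]
      positivity
    · rw [hdv z x hx]
      exact aux_bound hα.le hℓ (hFsm z hz) (hconv z hz) (hupper z hz) (hnn z hz) x v hx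
  set c : ℝ := min α (2 / ℓ) with hc_def
  have hc : 0 < c := lt_min hα (by positivity)
  -- pointwise key inequality
  have key : ∀ k : ℕ, ∀ s ∈ Icc a b,
      dv ((ξn k).toFun s) ((ξn k).deriv s) (ξ.deriv s - (ξn k).deriv s) -
        dv ((ξn k).toFun s) (ξ.deriv s) (ξ.deriv s - (ξn k).deriv s)
      ≤ -(c * ‖ξ.deriv s - (ξn k).deriv s‖ ^ 2) := by
    intro k s hs
    have hz : (ξn k).toFun s ∈ U := hmem k s hs
    have hsm := aux_strong_mono hα hℓ (hFsm _ hz) (hconv _ hz)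
      (hhomog _ hz) (hlower _ hz) (dv ((ξn k).toFun s)) (hdv0 _)
      (fun x hx => hdv _ x hx) ((ξn k).deriv s) (ξ.deriv s)
    have he : ξ.deriv s - (ξn k).deriv s = -((ξn k).deriv s - ξ.deriv s) :=
      (neg_sub _ _).symm
    rw [he, _root_.map_neg, _root_.map_neg, norm_neg]
    linarith
  -- integrability of the integrands
  have hΨ := aux_cont U hU G hsmooth dv hdv0 hdv (5 * ℓ)
    (fun z hz x v => by have := hbd z hz x v; linarith [hbd z hz x v])
  have hWopen : IsOpen {p : Evec N × Evec N × Evec N | p.1 ∈ U} :=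
    hU.preimage continuous_fst
  set Φ : Evec N × Evec N × Evec N → ℝ :=
    fun p => dv p.1 p.2.1 (p.2.2 - p.2.1) - dv p.1 p.2.2 (p.2.2 - p.2.1) with hΦdef
  have hΦcont : ContinuousOn Φ {p : Evec N × Evec N × Evec N | p.1 ∈ U} := by
    have hr1 : Continuous fun p : Evec N × Evec N × Evec N =>
        (p.1, p.2.1, p.2.2 - p.2.1) := by fun_prop
    have hr2 : Continuous fun p : Evec N × Evec N × Evec N =>
        (p.1, p.2.2, p.2.2 - p.2.1) := by fun_prop
    exact (hΨ.comp hr1.continuousOn (fun p hp => hp)).sub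
      (hΨ.comp hr2.continuousOn (fun p hp => hp))
  have key_int : ∀ k : ℕ,
      IntegrableOn (fun s =>
        dv ((ξn k).toFun s) ((ξn k).deriv s) (ξ.deriv s - (ξn k).deriv s) -
          dv ((ξn k).toFun s) (ξ.deriv s) (ξ.deriv s - (ξn k).deriv s)) (Icc a b) := by
    intro k
    set μ' := volume.restrict (Icc a b) with hμ'
    have hy_m : AEStronglyMeasurable ξ.deriv μ' := ξ.deriv_integrable.aestronglyMeasurable
    have hx_m : AEStronglyMeasurable (ξn k).deriv μ' :=
      (ξn k).deriv_integrable.aestronglyMeasurable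
    have hz_cont : ContinuousOn (ξn k).toFun (Icc a b) := by
      have hprim : ContinuousOn (fun t => ∫ u in Ioc a t, (ξn k).deriv u) (Icc a b) :=
        intervalIntegral.continuousOn_primitive (ξn k).deriv_integrable
      have h1 : ContinuousOn (fun t => (ξn k).toFun a + ∫ u in Ioc a t, (ξn k).deriv u)
          (Icc a b) := continuousOn_const.add hprim
      apply ContinuousOn.congr h1
      intro t ht
      rw [(ξn k).eq_add_integral t ht, intervalIntegral.integral_of_le ht.1]
    have hz_m : AEMeasurable (ξn k).toFun μ' := hz_cont.aemeasurable measurableSet_Icc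
    set m : ℝ → Evec N × Evec N × Evec N :=
      fun s => ((ξn k).toFun s, (ξn k).deriv s, ξ.deriv s) with hm_def
    have hm : AEMeasurable m μ' :=
      hz_m.prodMk (hx_m.aemeasurable.prodMk hy_m.aemeasurable)
    have hmem_ae : ∀ᵐ s ∂μ', m s ∈ {p : Evec N × Evec N × Evec N | p.1 ∈ U} := by
      filter_upwards [ae_restrict_mem measurableSet_Icc] with s hs
      exact hmem k s hs
    have hW_meas : MeasurableSet {p : Evec N × Evec N × Evec N | p.1 ∈ U} :=
      hWopen.measurableSet
    have hcomp : AEMeasurable (fun s => Φ (m s)) μ' := by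
      set m₀ := hm.mk m with hm₀def
      have hm₀ : Measurable m₀ := hm.measurable_mk
      have hmeq : m =ᵐ[μ'] m₀ := hm.ae_eq_mk
      have hmem₀ : ∀ᵐ s ∂μ', m₀ s ∈ {p : Evec N × Evec N × Evec N | p.1 ∈ U} := by
        filter_upwards [hmem_ae, hmeq] with s h1 h2
        rwa [← h2]
      have hν : ∀ᵐ p ∂(μ'.map m₀), p ∈ {p : Evec N × Evec N × Evec N | p.1 ∈ U} :=
        (ae_map_iff hm₀.aemeasurable hW_meas).mpr hmem₀
      have hrestr : (μ'.map m₀).restrict {p : Evec N × Evec N × Evec N | p.1 ∈ U}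
          = μ'.map m₀ := Measure.restrict_eq_self_of_ae_mem hν
      have hΦν : AEMeasurable Φ (μ'.map m₀) := by
        have := hΦcont.aemeasurable hW_meas (μ := μ'.map m₀)
        rwa [hrestr] at this
      have hcomp₀ : AEMeasurable (fun s => Φ (m₀ s)) μ' :=
        hΦν.comp_aemeasurable' hm₀.aemeasurable
      apply hcomp₀.congr
      filter_upwards [hmeq] with s hs
      rw [hs]
    have haesm : AEStronglyMeasurable (fun s =>
        dv ((ξn k).toFun s) ((ξn k).deriv s) (ξ.deriv s - (ξn k).deriv s) -
          dv ((ξn k).toFun s) (ξ.deriv s) (ξ.deriv s - (ξn k).deriv s)) μ' :=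
      hcomp.aestronglyMeasurable
    have hg_int : IntegrableOn (fun s =>
        10 * ℓ * (‖(ξn k).deriv s‖ ^ 2 + ‖ξ.deriv s‖ ^ 2)) (Icc a b) :=
      ((ξn k).deriv_sq_integrable.add ξ.deriv_sq_integrable).const_mul (10 * ℓ)
    apply Integrable.mono' hg_int haesm
    filter_upwards [ae_restrict_mem measurableSet_Icc] with s hs
    have hz : (ξn k).toFun s ∈ U := hmem k s hs
    have h1 := hbd _ hz ((ξn k).deriv s) (ξ.deriv s - (ξn k).deriv s)
    have h2 := hbd _ hz (ξ.deriv s) (ξ.deriv s - (ξn k).deriv s)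
    have h3 : ‖ξ.deriv s - (ξn k).deriv s‖ ≤ ‖ξ.deriv s‖ + ‖(ξn k).deriv s‖ :=
      norm_sub_le _ _
    rw [Real.norm_eq_abs]
    have h4 := abs_sub _ _ |>.trans (add_le_add h1 h2)
    calc |dv ((ξn k).toFun s) ((ξn k).deriv s) (ξ.deriv s - (ξn k).deriv s) -
          dv ((ξn k).toFun s) (ξ.deriv s) (ξ.deriv s - (ξn k).deriv s)|
        ≤ |dv ((ξn k).toFun s) ((ξn k).deriv s) (ξ.deriv s - (ξn k).deriv s)| +
          |dv ((ξn k).toFun s) (ξ.deriv s) (ξ.deriv s - (ξn k).deriv s)| := abs_sub _ _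
      _ ≤ 5 * ℓ * ‖(ξn k).deriv s‖ * ‖ξ.deriv s - (ξn k).deriv s‖ +
          5 * ℓ * ‖ξ.deriv s‖ * ‖ξ.deriv s - (ξn k).deriv s‖ := add_le_add h1 h2
      _ = 5 * ℓ * (‖(ξn k).deriv s‖ + ‖ξ.deriv s‖) * ‖ξ.deriv s - (ξn k).deriv s‖ := by
          ring
      _ ≤ 10 * ℓ * (‖(ξn k).deriv s‖ ^ 2 + ‖ξ.deriv s‖ ^ 2) := by
          have h5 : 5 * ℓ * (‖(ξn k).deriv s‖ + ‖ξ.deriv s‖) * ‖ξ.deriv s - (ξn k).deriv s‖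
              ≤ 5 * ℓ * (‖(ξn k).deriv s‖ + ‖ξ.deriv s‖) * (‖ξ.deriv s‖ + ‖(ξn k).deriv s‖) :=
            mul_le_mul_of_nonneg_left h3 (by positivity)
          nlinarith [mul_nonneg hℓ0.le (sq_nonneg (‖(ξn k).deriv s‖ - ‖ξ.deriv s‖))]
  have hu2_int : ∀ k : ℕ,
      IntegrableOn (fun s => ‖ξ.deriv s - (ξn k).deriv s‖ ^ 2) (Icc a b) := by
    intro k
    have hy_m : AEStronglyMeasurable ξ.deriv (volume.restrict (Icc a b)) :=
      ξ.deriv_integrable.aestronglyMeasurable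
    have hx_m : AEStronglyMeasurable (ξn k).deriv (volume.restrict (Icc a b)) :=
      (ξn k).deriv_integrable.aestronglyMeasurable
    have haesm : AEStronglyMeasurable (fun s => ‖ξ.deriv s - (ξn k).deriv s‖ ^ 2)
        (volume.restrict (Icc a b)) :=
      (((hy_m.sub hx_m).norm.aemeasurable).pow_const 2).aestronglyMeasurable
    have hg_int : IntegrableOn (fun s =>
        2 * (‖ξ.deriv s‖ ^ 2 + ‖(ξn k).deriv s‖ ^ 2)) (Icc a b) :=
      ((ξ.deriv_sq_integrable.add (ξn k).deriv_sq_integrable)).const_mul 2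
    apply Integrable.mono' hg_int haesm
    filter_upwards with s
    rw [Real.norm_eq_abs, abs_of_nonneg (by positivity)]
    have h3 : ‖ξ.deriv s - (ξn k).deriv s‖ ≤ ‖ξ.deriv s‖ + ‖(ξn k).deriv s‖ :=
      norm_sub_le _ _
    have h5 : ‖ξ.deriv s - (ξn k).deriv s‖ ^ 2 ≤ (‖ξ.deriv s‖ + ‖(ξn k).deriv s‖) ^ 2 :=
      pow_le_pow_left₀ (norm_nonneg _) h3 2
    nlinarith [sq_nonneg (‖ξ.deriv s‖ - ‖(ξn k).deriv s‖)]
  -- integral comparison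
  have hcomp : ∀ k : ℕ,
      (∫ s in a..b,
        (dv ((ξn k).toFun s) ((ξn k).deriv s) (ξ.deriv s - (ξn k).deriv s) -
          dv ((ξn k).toFun s) (ξ.deriv s) (ξ.deriv s - (ξn k).deriv s)))
      ≤ -(c * ∫ s in a..b, ‖ξ.deriv s - (ξn k).deriv s‖ ^ 2) := by
    intro k
    rw [intervalIntegral.integral_of_le haleb, intervalIntegral.integral_of_le haleb]
    have h1 : (∫ s in Ioc a b,
        (dv ((ξn k).toFun s) ((ξn k).deriv s) (ξ.deriv s - (ξn k).deriv s) -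
          dv ((ξn k).toFun s) (ξ.deriv s) (ξ.deriv s - (ξn k).deriv s)))
        ≤ ∫ s in Ioc a b, -(c * ‖ξ.deriv s - (ξn k).deriv s‖ ^ 2) := by
      apply setIntegral_mono_on ((key_int k).mono_set Ioc_subset_Icc_self)
        (((hu2_int k).mono_set Ioc_subset_Icc_self).const_mul c).neg measurableSet_Ioc
      intro s hs
      exact key k s (Ioc_subset_Icc_self hs)
    calc (∫ s in Ioc a b,
        (dv ((ξn k).toFun s) ((ξn k).deriv s) (ξ.deriv s - (ξn k).deriv s) -
          dv ((ξn k).toFun s) (ξ.deriv s) (ξ.deriv s - (ξn k).deriv s)))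
        ≤ ∫ s in Ioc a b, -(c * ‖ξ.deriv s - (ξn k).deriv s‖ ^ 2) := h1
      _ = -(c * ∫ s in Ioc a b, ‖ξ.deriv s - (ξn k).deriv s‖ ^ 2) := by
          rw [integral_neg, integral_const_mul]
  have hnonneg : ∀ k : ℕ, 0 ≤ ∫ s in a..b, ‖ξ.deriv s - (ξn k).deriv s‖ ^ 2 := by
    intro k
    rw [intervalIntegral.integral_of_le haleb]
    exact setIntegral_nonneg measurableSet_Ioc (fun s _ => by positivity)
  -- conclusion
  rw [Metric.tendsto_atTop]
  intro ε hε
  obtain ⟨K, hK⟩ := eventually_atTop.mp (hliminf (c * ε / 2) (by positivity))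
  refine ⟨K, fun k hk => ?_⟩
  have h1 := hK k hk
  have h2 := hcomp k
  have h3 : c * (∫ s in a..b, ‖ξ.deriv s - (ξn k).deriv s‖ ^ 2) ≤ c * ε / 2 := by
    linarith
  have h4 : (∫ s in a..b, ‖ξ.deriv s - (ξn k).deriv s‖ ^ 2) ≤ ε / 2 := by
    have h5 : c * (∫ s in a..b, ‖ξ.deriv s - (ξn k).deriv s‖ ^ 2) ≤ c * (ε / 2) := by
      linarith
    exact le_of_mul_le_mul_left h5 hc
  rw [Real.dist_eq, sub_zero, abs_of_nonneg (hnonneg k)]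
  linarith
end
end

section
/- Let δ > 0, L > 0 with Lδ < 8, and let χ_δ(t) := t²/(δ−t)² for t ∈ (0,δ). If t ∈ (0,δ) satisfies χ'_δ(t) ≤ L(1 + χ_δ(t)), then χ_δ(t) ≤ Lδ/(8 − Lδ), and consequently χ'_δ(t) ≤ 8L/(8 − Lδ). -/
open Set

noncomputable section

/-- The penalization function `χ_δ`: `0` for `t ≤ 0` and `t²/(δ−t)²` for `0 ≤ t < δ`. -/
def chi (δ t : ℝ) : ℝ := if t ≤ 0 then 0 else t ^ 2 / (δ - t) ^ 2

lemma chi_deriv (δ t : ℝ) (h0 : 0 < t) (h1 : t < δ) :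
    deriv (chi δ) t = 2 * t * δ / (δ - t) ^ 3 := by
  have hne : δ - t ≠ 0 := by linarith
  have hEq : chi δ =ᶠ[nhds t] fun x => x ^ 2 / (δ - x) ^ 2 := by
    filter_upwards [Ioo_mem_nhds h0 h1] with x hx
    simp [chi, not_le.mpr hx.1]
  rw [hEq.deriv_eq]
  have hf : HasDerivAt (fun x : ℝ => x ^ 2) (2 * t) t := by
    simpa using (hasDerivAt_pow 2 t)
  have hg : HasDerivAt (fun x : ℝ => (δ - x) ^ 2) (-(2 * (δ - t))) t := by
    have : HasDerivAt (fun x : ℝ => δ - x) (-1) t := by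
      simpa using (hasDerivAt_id t).const_sub δ
    simpa [mul_comm] using (this.fun_pow 2)
  have := (hf.fun_div hg (pow_ne_zero 2 hne)).deriv
  rw [this]
  field_simp
  ring

/-- If `Lδ < 8` and `t ∈ (0,δ)` satisfies `χ'_δ(t) ≤ L(1 + χ_δ(t))`, then
`χ_δ(t) ≤ Lδ/(8 − Lδ)` and consequently `χ'_δ(t) ≤ 8L/(8 − Lδ)`. -/
theorem stmt_18 (δ L t : ℝ) (hδ : 0 < δ) (hL : 0 < L) (hLδ : L * δ < 8)
    (ht : t ∈ Ioo (0:ℝ) δ)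
    (h : deriv (chi δ) t ≤ L * (1 + chi δ t)) :
    chi δ t ≤ L * δ / (8 - L * δ) ∧ deriv (chi δ) t ≤ 8 * L / (8 - L * δ) := by
  obtain ⟨h0, h1⟩ := ht
  have hne : (0:ℝ) < δ - t := by linarith
  have hchi : chi δ t = t ^ 2 / (δ - t) ^ 2 := by simp [chi, not_le.mpr h0]
  have hd : deriv (chi δ) t = 2 * t * δ / (δ - t) ^ 3 := chi_deriv δ t h0 h1
  rw [hchi, hd] at h ⊢
  -- key: χ' ≥ (8/δ) χ
  have hkey : (8 / δ) * (t ^ 2 / (δ - t) ^ 2) ≤ 2 * t * δ / (δ - t) ^ 3 := by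
    rw [div_mul_div_comm, div_le_div_iff₀ (by positivity) (by positivity)]
    nlinarith [mul_nonneg (mul_nonneg (sq_nonneg (δ - 2 * t)) h0.le) (sq_nonneg (δ - t))]
  have hc : t ^ 2 / (δ - t) ^ 2 ≤ L * δ / (8 - L * δ) := by
    have h8 : (8 / δ) * (t ^ 2 / (δ - t) ^ 2) ≤ L * (1 + t ^ 2 / (δ - t) ^ 2) :=
      le_trans hkey h
    set c := t ^ 2 / (δ - t) ^ 2 with hc
    have hcpos : 0 ≤ c := by positivity
    rw [div_mul_eq_mul_div, div_le_iff₀ hδ] at h8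
    rw [le_div_iff₀ (by linarith)]
    nlinarith
  refine ⟨hc, ?_⟩
  calc 2 * t * δ / (δ - t) ^ 3 ≤ L * (1 + t ^ 2 / (δ - t) ^ 2) := h
    _ ≤ L * (1 + L * δ / (8 - L * δ)) := by nlinarith
    _ = 8 * L / (8 - L * δ) := by
        have h8ne : (8 - L * δ) ≠ 0 := by linarith
        field_simp
        ring
end
end
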